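/- Assume CH. Then every nowhere dense P-filter on ℕ contains a tower: there is a tower all of whose members belong to the filter. -/

import Mathlib

open Set

/-- `A ⊆* B`: `A` is almost contained in `B`, i.e. `A \ B` is finite. -/
def AlmostSubset (A B : Set ℕ) : Prop := (A \ B).Finite

/-- An ideal on ℕ: contains `∅`, does not contain `ℕ`, and is closed under subsets and
finite unions. -/
def IsIdealFam (I : Set (Set ℕ)) : Prop :=
  ∅ ∈ I ∧ (univ : Set ℕ) ∉ I ∧ (∀ A B : Set ℕ, B ∈ I → A ⊆ B → A ∈ I) ∧
    ∀ A B : Set ℕ, A ∈ I → B ∈ I → A ∪ B ∈ I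

/-- A P-ideal: an ideal in which every countable subfamily has a pseudounion belonging to
the ideal. -/
def IsPIdeal (I : Set (Set ℕ)) : Prop :=
  IsIdealFam I ∧ ∀ C : Set (Set ℕ), C.Countable → C ⊆ I →
    ∃ B ∈ I, ∀ A ∈ C, AlmostSubset A B

/-- A family of sets is tall if every infinite subset of ℕ has infinite intersection with
some member of the family. -/
def IsTallFam (I : Set (Set ℕ)) : Prop :=
  ∀ A : Set ℕ, A.Infinite → ∃ B ∈ I, (A ∩ B).Infinite

/-- A filter on ℕ: contains `ℕ`, does not contain `∅`, and is closed under finite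
intersections and supersets. -/
def IsFilterFam (F : Set (Set ℕ)) : Prop :=
  (univ : Set ℕ) ∈ F ∧ ∅ ∉ F ∧ (∀ A B : Set ℕ, A ∈ F → B ∈ F → A ∩ B ∈ F) ∧
    ∀ A B : Set ℕ, A ∈ F → A ⊆ B → B ∈ F

/-- A P-filter: a filter in which every countable subfamily has an infinite
pseudointersection belonging to the filter. -/
def IsPFilterFam (F : Set (Set ℕ)) : Prop :=
  IsFilterFam F ∧ ∀ C : Set (Set ℕ), C.Countable → C ⊆ F →
    ∃ X ∈ F, X.Infinite ∧ ∀ A ∈ C, AlmostSubset X A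

/-- A family of sets is nowhere dense (as a filter) if it has no infinite
pseudointersection. -/
def IsNwdFam (F : Set (Set ℕ)) : Prop :=
  ¬ ∃ X : Set ℕ, X.Infinite ∧ ∀ A ∈ F, AlmostSubset X A

/-- A (decreasing) tower: a `⊆*`-decreasing family of infinite subsets of ℕ indexed by an
ordinal `κ`, with no infinite pseudointersection. -/
def IsTower (κ : Ordinal) (A : Ordinal → Set ℕ) : Prop :=
  (∀ α < κ, (A α).Infinite) ∧
  (∀ α β : Ordinal, α < β → β < κ → AlmostSubset (A β) (A α)) ∧
  ¬ ∃ X : Set ℕ, X.Infinite ∧ ∀ α < κ, AlmostSubset X (A α)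

/-- An increasing tower: a `⊆*`-increasing family of infinite subsets of ℕ indexed by an
ordinal `κ` such that every infinite subset of ℕ has infinite intersection with some
member. -/
def IsIncTower (κ : Ordinal) (B : Ordinal → Set ℕ) : Prop :=
  (∀ α < κ, (B α).Infinite) ∧
  (∀ α β : Ordinal, α < β → β < κ → AlmostSubset (B α) (B β)) ∧
  ∀ X : Set ℕ, X.Infinite → ∃ γ < κ, (B γ ∩ X).Infinite

universe u v

theorem ch_transfer (h : (2 : Cardinal.{u}) ^ Cardinal.aleph0 = Cardinal.aleph 1) :
    (2 : Cardinal.{v}) ^ Cardinal.aleph0 = Cardinal.aleph 1 := by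
  apply Cardinal.lift_injective.{u}
  rw [Cardinal.lift_power, Cardinal.lift_two, Cardinal.lift_aleph0, Cardinal.lift_aleph,
    Ordinal.lift_one]
  have h2 := congrArg Cardinal.lift.{v} h
  rwa [Cardinal.lift_power, Cardinal.lift_two, Cardinal.lift_aleph0, Cardinal.lift_aleph,
    Ordinal.lift_one] at h2

noncomputable def towerA (F : Set (Set ℕ)) (f : Ordinal.{u} → Set ℕ) : Ordinal.{u} → Set ℕ :=
  Ordinal.lt_wf.fix (fun α rec => Classical.epsilon (fun S : Set ℕ =>
    S ∈ F ∧ (∀ β (h : β < α), AlmostSubset S (rec β h)) ∧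
      ((f α).Infinite → (f α \ S).Infinite)))

theorem towerA_eq (F : Set (Set ℕ)) (f : Ordinal.{u} → Set ℕ) (α : Ordinal.{u}) :
    towerA F f α = Classical.epsilon (fun S : Set ℕ =>
      S ∈ F ∧ (∀ β, β < α → AlmostSubset S (towerA F f β)) ∧
        ((f α).Infinite → (f α \ S).Infinite)) :=
  Ordinal.lt_wf.fix_eq _ _

theorem mem_PFilter_infinite {F : Set (Set ℕ)} (hP : IsPFilterFam F) {S : Set ℕ}
    (hS : S ∈ F) : S.Infinite := by
  obtain ⟨X, _, hXinf, hXps⟩ := hP.2 {S} (Set.countable_singleton S) (by simpa)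
  have h : (X \ S).Finite := hXps S rfl
  have hsub : X \ (X \ S) ⊆ S := fun x hx => by
    by_contra hxS; exact hx.2 ⟨hx.1, hxS⟩
  exact (hXinf.diff h).mono hsub

theorem towerA_spec {F : Set (Set ℕ)} (f : Ordinal.{u} → Set ℕ)
    (hP : IsPFilterFam F) (hnwd : IsNwdFam F) :
    ∀ α < (Cardinal.aleph 1).ord, towerA F f α ∈ F ∧
      (∀ β, β < α → AlmostSubset (towerA F f α) (towerA F f β)) ∧
      ((f α).Infinite → (f α \ towerA F f α).Infinite) := by
  intro α
  induction α using Ordinal.induction with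
  | _ α ih =>
  intro hα
  have key : ∃ S : Set ℕ, S ∈ F ∧ (∀ β, β < α → AlmostSubset S (towerA F f β)) ∧
      ((f α).Infinite → (f α \ S).Infinite) := by
    have hcount : (towerA F f '' Set.Iio α).Countable := by
      apply Set.Countable.image
      rw [Cardinal.countable_iff_lt_aleph_one, Ordinal.mk_Iio_ordinal]
      have h1 : α.card ≤ Cardinal.aleph0 := by
        have := Cardinal.lt_ord.mp hα
        rwa [← Cardinal.succ_aleph0, Order.lt_succ_iff] at this
      calc Cardinal.lift.{u+1} α.card ≤ Cardinal.lift.{u+1} Cardinal.aleph0 :=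
            Cardinal.lift_le.mpr h1
        _ = Cardinal.aleph0 := Cardinal.lift_aleph0
        _ < Cardinal.aleph 1 := Cardinal.aleph0_lt_aleph_one
    have hCF : towerA F f '' Set.Iio α ⊆ F := by
      rintro _ ⟨β, hβ, rfl⟩
      exact (ih β hβ (hβ.trans hα)).1
    obtain ⟨X, hXF, hXinf, hXps⟩ := hP.2 _ hcount hCF
    by_cases hfi : (f α).Infinite
    · have hex : ∃ B ∈ F, ¬ AlmostSubset (f α) B := by
        by_contra h
        push_neg at h
        exact hnwd ⟨f α, hfi, h⟩
      obtain ⟨B, hBF, hB⟩ := hex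
      refine ⟨X ∩ B, hP.1.2.2.1 X B hXF hBF, ?_, ?_⟩
      · intro β hβ
        exact (hXps _ ⟨β, hβ, rfl⟩).subset fun x hx => ⟨hx.1.1, hx.2⟩
      · intro _
        have hsub : f α \ B ⊆ f α \ (X ∩ B) := fun x hx => ⟨hx.1, fun hxm => hx.2 hxm.2⟩
        exact Set.Infinite.mono hsub hB
    · exact ⟨X, hXF, fun β hβ => hXps _ ⟨β, hβ, rfl⟩, fun h => absurd h hfi⟩
  rw [towerA_eq]
  exact Classical.epsilon_spec key

/-- Under CH, every nowhere dense P-filter on ℕ contains a tower. -/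
theorem nwd_Pfilter_contains_tower_of_CH
    (ch : (2 : Cardinal) ^ Cardinal.aleph0 = Cardinal.aleph 1)
    (F : Set (Set ℕ)) (hP : IsPFilterFam F) (hnwd : IsNwdFam F) :
    ∃ (κ : Ordinal) (A : Ordinal → Set ℕ), IsTower κ A ∧ ∀ α < κ, A α ∈ F := by
  have ch2 := ch_transfer ch
  have hcard : Cardinal.lift.{u_2} (Cardinal.mk (Set ℕ)) =
      Cardinal.lift.{0} (Cardinal.mk ((Cardinal.aleph 1).ord.ToType)) := by
    rw [Cardinal.mk_toType, Cardinal.card_ord, Cardinal.mk_set, Cardinal.mk_nat,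
      Cardinal.lift_power, Cardinal.lift_two, Cardinal.lift_aleph0, Cardinal.lift_aleph,
      Ordinal.lift_one, ch2]
  obtain ⟨e⟩ := Cardinal.lift_mk_eq'.mp hcard
  set f : Ordinal.{u_2} → Set ℕ := fun α =>
    if h : α < (Cardinal.aleph 1).ord then
      e.symm ((Ordinal.ToType.mk (o := (Cardinal.aleph 1).ord)) ⟨α, h⟩) else ∅ with hf
  have hsurj : ∀ S : Set ℕ, ∃ α < (Cardinal.aleph 1).ord, f α = S := by
    intro S
    set x := (Ordinal.ToType.mk (o := (Cardinal.aleph 1).ord)).symm (e S) with hx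
    have hx2 : x.1 < (Cardinal.aleph 1).ord := x.2
    refine ⟨x.1, hx2, ?_⟩
    show (if h : x.1 < (Cardinal.aleph 1).ord then
      e.symm ((Ordinal.ToType.mk (o := (Cardinal.aleph 1).ord)) ⟨x.1, h⟩) else ∅) = S
    rw [dif_pos hx2]
    show e.symm ((Ordinal.ToType.mk (o := (Cardinal.aleph 1).ord)) x) = S
    rw [hx, OrderIso.apply_symm_apply, Equiv.symm_apply_apply]
  have spec := towerA_spec f hP hnwd
  refine ⟨(Cardinal.aleph 1).ord, towerA F f, ⟨?_, ?_, ?_⟩, fun α hα => (spec α hα).1⟩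
  · exact fun α hα => mem_PFilter_infinite hP (spec α hα).1
  · exact fun α β hab hβ => (spec β hβ).2.1 α hab
  · rintro ⟨X, hXinf, hX⟩
    obtain ⟨α, hα, hfa⟩ := hsurj X
    subst hfa
    exact (spec α hα).2.2 hXinf (hX α hα)
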